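/- Let f : ℝ^{m×n} → ℝ (m ≤ n) be differentiable with L-Lipschitz gradient (with respect to the Frobenius norm). Fix W^(t), M^(t) ∈ ℝ^{m×n}, let M^(t) = U S Vᵀ be an SVD with semi-orthogonal polar factor UVᵀ (so (UVᵀ)(UVᵀ)ᵀ = I_m and ‖UVᵀ‖_F = √m), let O^(t) = UVᵀ + E with ‖E‖_F ≤ δ√m for some δ ≥ 0, and let W^(t+1) = W^(t) − η_t O^(t) with η_t > 0. Assume in addition the alignment inequality −⟨∇f(W^(t)), UVᵀ⟩_F ≤ −¼‖∇f(W^(t))‖_F + (5/2)‖∇f(W^(t)) − M^(t)‖_F. Then f(W^(t+1)) ≤ f(W^(t)) − (η_t/4 − η_t√m·δ)‖∇f(W^(t))‖_F + (5η_t/2)‖∇f(W^(t)) − M^(t)‖_F + η_t²mL/2 + η_t²mLδ + η_t²Lmδ²/2. -/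

import Mathlib

open Matrix Finset

/-- Frobenius inner product `⟨A,B⟩_F = tr(AᵀB)`. -/
noncomputable def frobInner {n m : ℕ} (A B : Matrix (Fin n) (Fin m) ℝ) : ℝ :=
  (Aᵀ * B).trace

/-- Frobenius norm. -/
noncomputable def frobNorm {n m : ℕ} (A : Matrix (Fin n) (Fin m) ℝ) : ℝ :=
  Real.sqrt (frobInner A A)

section helpers
variable {n m : ℕ}

lemma frobInner_eq_sum (A B : Matrix (Fin n) (Fin m) ℝ) :
    frobInner A B = ∑ p : Fin n × Fin m, A p.1 p.2 * B p.1 p.2 := by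
  rw [frobInner, Matrix.trace, Fintype.sum_prod_type_right]
  simp [Matrix.diag, Matrix.mul_apply, mul_comm]

lemma frobInner_self_nonneg (A : Matrix (Fin n) (Fin m) ℝ) : 0 ≤ frobInner A A := by
  rw [frobInner_eq_sum]; exact Finset.sum_nonneg fun p _ => mul_self_nonneg _

lemma frobNorm_nonneg (A : Matrix (Fin n) (Fin m) ℝ) : 0 ≤ frobNorm A := Real.sqrt_nonneg _

lemma frobNorm_sq (A : Matrix (Fin n) (Fin m) ℝ) : frobNorm A ^ 2 = frobInner A A :=
  Real.sq_sqrt (frobInner_self_nonneg A)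

lemma frobInner_cs (A B : Matrix (Fin n) (Fin m) ℝ) :
    frobInner A B ≤ frobNorm A * frobNorm B := by
  rw [frobInner_eq_sum, frobNorm, frobNorm, frobInner_eq_sum, frobInner_eq_sum]
  simpa [sq] using Real.sum_mul_le_sqrt_mul_sqrt Finset.univ
    (fun p : Fin n × Fin m => A p.1 p.2) (fun p => B p.1 p.2)

lemma frobInner_add_right (A B C : Matrix (Fin n) (Fin m) ℝ) :
    frobInner A (B + C) = frobInner A B + frobInner A C := by
  simp [frobInner_eq_sum, mul_add, Finset.sum_add_distrib]

lemma frobInner_smul_right (s : ℝ) (A B : Matrix (Fin n) (Fin m) ℝ) :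
    frobInner A (s • B) = s * frobInner A B := by
  simp [frobInner_eq_sum, Finset.mul_sum]
  exact Finset.sum_congr rfl fun p _ => by ring

lemma frobInner_sub_left (A B C : Matrix (Fin n) (Fin m) ℝ) :
    frobInner (A - B) C = frobInner A C - frobInner B C := by
  simp [frobInner_eq_sum, sub_mul, Finset.sum_sub_distrib]

lemma frobNorm_smul (s : ℝ) (A : Matrix (Fin n) (Fin m) ℝ) :
    frobNorm (s • A) = |s| * frobNorm A := by
  have h : frobInner (s • A) (s • A) = s ^ 2 * frobInner A A := by
    simp [frobInner_eq_sum, Finset.mul_sum]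
    exact Finset.sum_congr rfl fun p _ => by ring
  rw [frobNorm, h, Real.sqrt_mul (sq_nonneg s), Real.sqrt_sq_eq_abs, frobNorm]

lemma frobNorm_add_le (A B : Matrix (Fin n) (Fin m) ℝ) :
    frobNorm (A + B) ≤ frobNorm A + frobNorm B := by
  have h := frobInner_cs A B
  have e : frobInner (A + B) (A + B)
      = frobInner A A + 2 * frobInner A B + frobInner B B := by
    simp only [frobInner_eq_sum, Matrix.add_apply]
    rw [Finset.mul_sum, ← Finset.sum_add_distrib, ← Finset.sum_add_distrib]
    exact Finset.sum_congr rfl fun p _ => by ring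
  have hA := frobNorm_sq A; have hB := frobNorm_sq B
  have h2 : frobInner (A + B) (A + B) ≤ (frobNorm A + frobNorm B) ^ 2 := by nlinarith
  calc frobNorm (A + B) = Real.sqrt (frobInner (A + B) (A + B)) := rfl
    _ ≤ Real.sqrt ((frobNorm A + frobNorm B) ^ 2) := Real.sqrt_le_sqrt h2
    _ = frobNorm A + frobNorm B :=
        Real.sqrt_sq (add_nonneg (frobNorm_nonneg A) (frobNorm_nonneg B))

/-- Descent (Taylor) bound from directional derivatives and Lipschitz gradient. -/
lemma taylor_bound
    (f : Matrix (Fin n) (Fin m) ℝ → ℝ)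
    (gradf : Matrix (Fin n) (Fin m) ℝ → Matrix (Fin n) (Fin m) ℝ)
    (hgrad : ∀ W V : Matrix (Fin n) (Fin m) ℝ,
      HasDerivAt (fun s : ℝ => f (W + s • V)) (frobInner (gradf W) V) 0)
    (L : ℝ) (hL : 0 ≤ L)
    (hlip : ∀ X Y : Matrix (Fin n) (Fin m) ℝ,
      frobNorm (gradf X - gradf Y) ≤ L * frobNorm (X - Y))
    (W V : Matrix (Fin n) (Fin m) ℝ) :
    f (W + V) ≤ f W + frobInner (gradf W) V + L / 2 * frobNorm V ^ 2 := by
  set c : ℝ := frobInner (gradf W) V with hc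
  set φ : ℝ → ℝ := fun s => f W + s * c + L * frobNorm V ^ 2 / 2 * s ^ 2 - f (W + s • V)
    with hφ
  have hg : ∀ s₀ : ℝ, HasDerivAt (fun s : ℝ => f (W + s • V))
      (frobInner (gradf (W + s₀ • V)) V) s₀ := by
    intro s₀
    have h1 : HasDerivAt (fun t : ℝ => f ((W + s₀ • V) + t • V))
        (frobInner (gradf (W + s₀ • V)) V) 0 := hgrad _ _
    have h2 : HasDerivAt (fun s : ℝ => s - s₀) 1 s₀ := (hasDerivAt_id s₀).sub_const s₀
    have h1' : HasDerivAt (fun t : ℝ => f ((W + s₀ • V) + t • V))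
        (frobInner (gradf (W + s₀ • V)) V) (s₀ - s₀) := by simpa using h1
    have h3 : HasDerivAt ((fun t : ℝ => f ((W + s₀ • V) + t • V)) ∘ (fun s : ℝ => s - s₀))
        (frobInner (gradf (W + s₀ • V)) V * 1) s₀ := HasDerivAt.comp s₀ h1' h2
    have h4 : ((fun t : ℝ => f ((W + s₀ • V) + t • V)) ∘ (fun s : ℝ => s - s₀))
        = fun s => f (W + s • V) := by
      funext s
      show f ((W + s₀ • V) + (s - s₀) • V) = f (W + s • V)
      congr 1; rw [sub_smul]; abel
    rw [h4, mul_one] at h3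
    exact h3
  have hφd : ∀ s₀ : ℝ, HasDerivAt φ
      (c + L * frobNorm V ^ 2 * s₀ - frobInner (gradf (W + s₀ • V)) V) s₀ := by
    intro s₀
    have ha : HasDerivAt (fun s : ℝ => f W + s * c + L * frobNorm V ^ 2 / 2 * s ^ 2)
        (c + L * frobNorm V ^ 2 * s₀) s₀ := by
      have h1 : HasDerivAt (fun s : ℝ => s * c) c s₀ := by
        simpa using (hasDerivAt_id s₀).mul_const c
      have h2 : HasDerivAt (fun s : ℝ => L * frobNorm V ^ 2 / 2 * s ^ 2)
          (L * frobNorm V ^ 2 / 2 * (2 * s₀)) s₀ := by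
        have := (hasDerivAt_pow 2 s₀).const_mul (L * frobNorm V ^ 2 / 2)
        simpa using this
      have := (h1.const_add (f W)).add h2
      rw [show c + L * frobNorm V ^ 2 * s₀ = c + L * frobNorm V ^ 2 / 2 * (2 * s₀) by ring]
      exact this
    exact ha.sub (hg s₀)
  have hd : ∀ s₀ ∈ Set.Icc (0:ℝ) 1,
      0 ≤ c + L * frobNorm V ^ 2 * s₀ - frobInner (gradf (W + s₀ • V)) V := by
    intro s₀ hs₀
    have hcs : frobInner (gradf (W + s₀ • V) - gradf W) V
        ≤ frobNorm (gradf (W + s₀ • V) - gradf W) * frobNorm V := frobInner_cs _ _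
    have hlipb : frobNorm (gradf (W + s₀ • V) - gradf W) ≤ L * (s₀ * frobNorm V) := by
      have := hlip (W + s₀ • V) W
      have e : W + s₀ • V - W = s₀ • V := by abel
      rw [e, frobNorm_smul, abs_of_nonneg hs₀.1] at this
      linarith [this]
    have hsub : frobInner (gradf (W + s₀ • V) - gradf W) V
        = frobInner (gradf (W + s₀ • V)) V - c := frobInner_sub_left _ _ _
    have hVn := frobNorm_nonneg V
    nlinarith [mul_le_mul_of_nonneg_right hlipb hVn]
  have hmono : MonotoneOn φ (Set.Icc (0:ℝ) 1) := by
    apply monotoneOn_of_deriv_nonneg (convex_Icc 0 1)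
    · exact (fun s _ => ((hφd s).differentiableAt).continuousAt.continuousWithinAt)
    · intro s hs
      exact ((hφd s).differentiableAt).differentiableWithinAt
    · intro s hs
      rw [interior_Icc] at hs
      rw [(hφd s).deriv]
      exact hd s ⟨le_of_lt hs.1, le_of_lt hs.2⟩
  have h01 := hmono (Set.mem_Icc.2 ⟨le_refl 0, zero_le_one⟩)
    (Set.mem_Icc.2 ⟨zero_le_one, le_refl 1⟩) zero_le_one
  have hφ0 : φ 0 = 0 := by simp [hφ]
  have hφ1 : φ 1 = f W + c + L * frobNorm V ^ 2 / 2 - f (W + V) := by simp [hφ]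
  rw [hφ0, hφ1] at h01
  linarith

end helpers

/-- **Descent lemma with Newton–Schulz approximation error.**
`f` is differentiable with gradient `gradf` (encoded via directional derivatives w.r.t. the
Frobenius inner product) which is `L`-Lipschitz in the Frobenius norm.  With semi-orthogonal
polar factor `P = UVᵀ` (`PPᵀ = I`), inexact orthogonalization `O = P + E`, `‖E‖_F ≤ δ√m`,
update `W' = W − ηO`, and the alignment inequality
`−⟨∇f(W), P⟩ ≤ −¼‖∇f(W)‖ + (5/2)‖∇f(W) − M‖`, one gets the stated one-step descent bound. -/
theorem descent_lemma_newton_schulz_error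
    {m n : ℕ} (hmn : m ≤ n)
    (f : Matrix (Fin m) (Fin n) ℝ → ℝ)
    (gradf : Matrix (Fin m) (Fin n) ℝ → Matrix (Fin m) (Fin n) ℝ)
    (hgrad : ∀ W V : Matrix (Fin m) (Fin n) ℝ,
      HasDerivAt (fun s : ℝ => f (W + s • V)) (frobInner (gradf W) V) 0)
    (L : ℝ) (hL : 0 ≤ L)
    (hlip : ∀ X Y : Matrix (Fin m) (Fin n) ℝ,
      frobNorm (gradf X - gradf Y) ≤ L * frobNorm (X - Y))
    (Wt Mt P E O W' : Matrix (Fin m) (Fin n) ℝ)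
    (hP : P * Pᵀ = 1)
    (δ : ℝ) (hδ : 0 ≤ δ)
    (hO : O = P + E)
    (hE : frobNorm E ≤ δ * Real.sqrt m)
    (η : ℝ) (hη : 0 < η)
    (hW' : W' = Wt - η • O)
    (halign : -(frobInner (gradf Wt) P) ≤
      -(1 / 4) * frobNorm (gradf Wt) + (5 / 2) * frobNorm (gradf Wt - Mt)) :
    f W' ≤ f Wt - (η / 4 - η * Real.sqrt m * δ) * frobNorm (gradf Wt)
      + (5 * η / 2) * frobNorm (gradf Wt - Mt)
      + η ^ 2 * m * L / 2 + η ^ 2 * m * L * δ + η ^ 2 * L * m * δ ^ 2 / 2 := by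
  set g := gradf Wt with hg
  set G := frobNorm g with hG
  set D := frobNorm (g - Mt) with hD
  have hGnn : 0 ≤ G := frobNorm_nonneg _
  have hmnn : (0:ℝ) ≤ (m:ℝ) := Nat.cast_nonneg m
  have hsm : Real.sqrt m ^ 2 = (m:ℝ) := Real.sq_sqrt hmnn
  have hsmn : 0 ≤ Real.sqrt (m:ℝ) := Real.sqrt_nonneg _
  -- ‖P‖_F = √m
  have hPnorm : frobNorm P = Real.sqrt m := by
    have : frobInner P P = (m:ℝ) := by
      rw [frobInner, Matrix.trace_mul_comm, hP]
      simp [Matrix.trace_one]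
    rw [frobNorm, this]
  -- ‖O‖ bound
  have hOn : frobNorm O ≤ Real.sqrt m * (1 + δ) := by
    rw [hO]
    calc frobNorm (P + E) ≤ frobNorm P + frobNorm E := frobNorm_add_le _ _
      _ ≤ Real.sqrt m + δ * Real.sqrt m := by rw [hPnorm]; linarith
      _ = Real.sqrt m * (1 + δ) := by ring
  -- rewrite W'
  have hW'' : W' = Wt + (-η) • O := by rw [hW', sub_eq_add_neg, neg_smul]
  have htb := taylor_bound f gradf hgrad L hL hlip Wt ((-η) • O)
  rw [← hW''] at htb
  -- inner product term
  have hin : frobInner g ((-η) • O) = -η * (frobInner g P + frobInner g E) := by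
    rw [frobInner_smul_right, hO, frobInner_add_right]
  -- bound on E inner product
  have hEin : -(frobInner g E) ≤ G * (δ * Real.sqrt m) := by
    have h1 : frobInner g ((-1 : ℝ) • E) ≤ frobNorm g * frobNorm ((-1:ℝ) • E) :=
      frobInner_cs _ _
    rw [frobInner_smul_right, frobNorm_smul] at h1
    simp only [abs_neg, abs_one, one_mul, neg_one_mul] at h1
    have h2 : frobNorm g * frobNorm E ≤ G * (δ * Real.sqrt m) :=
      mul_le_mul_of_nonneg_left hE hGnn
    linarith
  -- norm squared term
  have hOsq : frobNorm ((-η) • O) ^ 2 ≤ η ^ 2 * ((m:ℝ) * (1 + δ) ^ 2) := by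
    have h1 : frobNorm ((-η) • O) = η * frobNorm O := by
      rw [frobNorm_smul, abs_neg, abs_of_pos hη]
    have h2 : frobNorm O ^ 2 ≤ (Real.sqrt m * (1 + δ)) ^ 2 := by
      have := frobNorm_nonneg O
      nlinarith [hOn]
    rw [h1, mul_pow]
    calc η ^ 2 * frobNorm O ^ 2 ≤ η ^ 2 * (Real.sqrt m * (1 + δ)) ^ 2 := by
          exact mul_le_mul_of_nonneg_left h2 (sq_nonneg η)
      _ = η ^ 2 * ((m:ℝ) * (1 + δ) ^ 2) := by rw [mul_pow, hsm]
  have halign' : η * (-(frobInner g P)) ≤ η * (-(1/4) * G + (5/2) * D) :=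
    mul_le_mul_of_nonneg_left halign (le_of_lt hη)
  have hq : L / 2 * frobNorm ((-η) • O) ^ 2 ≤ L / 2 * (η ^ 2 * ((m:ℝ) * (1 + δ) ^ 2)) :=
    mul_le_mul_of_nonneg_left hOsq (by linarith)
  have hEin' : η * (-(frobInner g E)) ≤ η * (G * (δ * Real.sqrt m)) :=
    mul_le_mul_of_nonneg_left hEin (le_of_lt hη)
  rw [hin] at htb
  calc f W' ≤ f Wt + -η * (frobInner g P + frobInner g E)
        + L / 2 * frobNorm ((-η) • O) ^ 2 := htb
    _ = f Wt + η * (-(frobInner g P)) + η * (-(frobInner g E))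
        + L / 2 * frobNorm ((-η) • O) ^ 2 := by ring
    _ ≤ f Wt + η * (-(1/4) * G + (5/2) * D) + η * (G * (δ * Real.sqrt m))
        + L / 2 * (η ^ 2 * ((m:ℝ) * (1 + δ) ^ 2)) := by linarith
    _ = f Wt - (η / 4 - η * Real.sqrt m * δ) * G + (5 * η / 2) * D
        + η ^ 2 * m * L / 2 + η ^ 2 * m * L * δ + η ^ 2 * L * m * δ ^ 2 / 2 := by ring
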